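/- If H is an irredundant cover of a finite non-cyclic group G, then the size of H is at most the number of maximal cyclic subgroups of G. -/

import Mathlib

def IsCover {G : Type*} [Group G] (S : Set (Subgroup G)) : Prop :=
  (∀ H ∈ S, H ≠ (⊤ : Subgroup G)) ∧ ∀ g : G, ∃ H ∈ S, g ∈ H

def IsIrredundantCover {G : Type*} [Group G] (S : Set (Subgroup G)) : Prop :=
  IsCover S ∧ ∀ T : Set (Subgroup G), T ⊂ S → ¬ IsCover T

def IsMaxCyclic {G : Type*} [Group G] (C : Subgroup G) : Prop :=
  IsCyclic C ∧ ∀ D : Subgroup G, IsCyclic D → C ≤ D → C = D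

def OnlyOneSizedCovers (G : Type*) [Group G] : Prop :=
  ∀ S T : Set (Subgroup G), IsIrredundantCover S → IsIrredundantCover T →
    S.ncard = T.ncard

lemma zpowersIsCyclic {G : Type*} [Group G] (g : G) :
    IsCyclic (Subgroup.zpowers g) := by
  refine ⟨⟨⟨g, Subgroup.mem_zpowers g⟩, fun x => ?_⟩⟩
  obtain ⟨n, hn⟩ := Subgroup.mem_zpowers_iff.mp x.2
  exact ⟨n, Subtype.ext (by push_cast; exact hn)⟩

theorem stmt1 (G : Type*) [Group G] [Finite G] (hG : ¬ IsCyclic G)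
    (S : Set (Subgroup G)) (hS : IsIrredundantCover S) :
    S.ncard ≤ {C : Subgroup G | IsMaxCyclic C}.ncard := by
  classical
  obtain ⟨⟨hprop, hcov⟩, hirr⟩ := hS
  -- For each member of the cover there is an element covered only by it.
  have key : ∀ H : Subgroup G, ∃ g : G, H ∈ S → ∀ K ∈ S, g ∈ K → K = H := by
    intro H
    by_cases hH : H ∈ S
    · by_contra hc
      push_neg at hc
      apply hirr (S \ {H}) (Set.sdiff_singleton_ssubset.mpr hH)
      refine ⟨fun K hK => hprop K hK.1, fun g => ?_⟩
      obtain ⟨K, hK, hgK, hne⟩ := (hc g).2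
      exact ⟨K, ⟨hK, hne⟩, hgK⟩
    · exact ⟨1, fun h => absurd h hH⟩
  -- Every element lies in a maximal cyclic subgroup.
  have maxc : ∀ g : G, ∃ C : Subgroup G, IsMaxCyclic C ∧ g ∈ C := by
    intro g
    obtain ⟨C, hC, hmax⟩ := Set.Finite.exists_maximalFor id
      {C : Subgroup G | IsCyclic C ∧ g ∈ C} (Set.toFinite _)
      ⟨Subgroup.zpowers g, zpowersIsCyclic g, Subgroup.mem_zpowers g⟩
    refine ⟨C, ⟨hC.1, fun D hD hle => ?_⟩, hC.2⟩
    exact le_antisymm hle (hmax ⟨hD, hle hC.2⟩ hle)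
  choose gfun hg using key
  choose Cfun hCmax hgC using maxc
  apply Set.ncard_le_ncard_of_injOn (fun H => Cfun (gfun H))
  · intro H _
    exact hCmax (gfun H)
  · intro H1 h1 H2 h2 heq
    simp only at heq
    -- The common maximal cyclic subgroup C
    obtain ⟨x, hx⟩ := (hCmax (gfun H1)).1
    obtain ⟨K, hK, hxK⟩ := hcov (x : G)
    have hCK : ∀ y ∈ Cfun (gfun H1), y ∈ K := by
      intro y hy
      obtain ⟨n, hn⟩ := hx ⟨y, hy⟩
      have hyx : ((x : G)) ^ n = y := by
        have := congrArg (Subtype.val) hn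
        simpa using this
      rw [← hyx]
      exact zpow_mem hxK n
    have e1 : K = H1 := hg H1 h1 K hK (hCK _ (hgC (gfun H1)))
    have e2 : K = H2 := hg H2 h2 K hK (hCK _ (heq ▸ hgC (gfun H2)))
    rw [← e1, e2]
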